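/- arXiv:1905.10013 — 5 statements merged into one kernel-verified Lean document; each statement's English description precedes it below -/
import Mathlib

section
/- Let Σ ∈ ℝ^{p×p} be symmetric positive definite, partitioned into m diagonal blocks Σ_{G_i,G_i} by a partition G_1,...,G_m of {1,...,p}. Let D = diag(Σ_{G_1G_1}^{-1/2},...,Σ_{G_mG_m}^{-1/2}) and η = min(2λ_min(DΣD), 1). Then the block-diagonal matrix S with blocks S_i = η·Σ_{G_i,G_i} satisfies S ⪯ 2Σ, i.e., 2Σ − S is positive semidefinite. -/
open Matrix

/-- The group-block-diagonal part of a matrix, w.r.t. a group assignment `g`. -/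
def blockDiagPart {p m : ℕ} (g : Fin p → Fin m) (A : Matrix (Fin p) (Fin p) ℝ) :
    Matrix (Fin p) (Fin p) ℝ :=
  Matrix.of fun i j => if g i = g j then A i j else 0

/-- Auxiliary: for a Hermitian real matrix `M` with `c ≤ 2 λ_i` for all eigenvalues,
`2M - c•1` is positive semidefinite. -/
lemma herm_smul_sub_psd {n : ℕ} (M : Matrix (Fin n) (Fin n) ℝ) (hM : M.IsHermitian) (c : ℝ)
    (hc : ∀ i, c ≤ 2 * hM.eigenvalues i) :
    ((2:ℝ) • M - c • (1 : Matrix (Fin n) (Fin n) ℝ)).PosSemidef := by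
  set U : Matrix (Fin n) (Fin n) ℝ := (hM.eigenvectorUnitary : Matrix (Fin n) (Fin n) ℝ) with hU
  have hUU : U * star U = 1 := Matrix.mem_unitaryGroup_iff.mp hM.eigenvectorUnitary.2
  set ev := hM.eigenvalues with hev
  have hc' : ∀ i, c ≤ 2 * ev i := hc
  have hspec : M = U * diagonal (RCLike.ofReal ∘ ev) * star U := hM.spectral_theorem
  clear_value ev
  have hd : diagonal (fun i => 2 * ev i - c) =
      (2:ℝ) • diagonal (RCLike.ofReal ∘ ev) - c • (1 : Matrix (Fin n) (Fin n) ℝ) := by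
    ext i j
    by_cases h : i = j <;> simp [diagonal, h, Matrix.one_apply]
  have h1 : (2:ℝ) • M - c • (1 : Matrix (Fin n) (Fin n) ℝ)
      = U * diagonal (fun i => 2 * ev i - c) * star U := by
    rw [hspec, hd, Matrix.mul_sub, Matrix.sub_mul]
    simp only [Matrix.mul_smul, Matrix.smul_mul, Matrix.mul_one, hUU]
  rw [h1]
  exact (Matrix.posSemidef_diagonal_iff.mpr fun i => by
    have := hc' i; linarith).mul_mul_conjTranspose_same U

/-- group-knockoff construction of Dai–Barber.  Let `Σ` be symmetric
positive definite, `D` the block-diagonal matrix of inverse symmetric square roots of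
the diagonal blocks of `Σ` (characterized by: `D` positive definite, group-block-diagonal,
and `D * Σ_B * D = 1` where `Σ_B` is the block-diagonal part of `Σ`), and
`η = min (2 λ_min(D Σ D)) 1`.  Then `S = η • Σ_B` satisfies `S ⪯ 2Σ`. -/
theorem group_knockoff_psd {p m : ℕ} [NeZero p]
    (g : Fin p → Fin m)
    (Sig D : Matrix (Fin p) (Fin p) ℝ)
    (hSig : Sig.PosDef)
    (hD : D.PosDef)
    (hDblock : ∀ i j, g i ≠ g j → D i j = 0)
    (hDsqrt : D * blockDiagPart g Sig * D = 1)
    (hDSD : (D * Sig * D).PosDef)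
    (η : ℝ) (hη : η = min (2 * ⨅ i, hDSD.1.eigenvalues i) 1) :
    ((2 : ℝ) • Sig - η • blockDiagPart g Sig).PosSemidef := by
  have hN : (D * Sig * D).IsHermitian := hDSD.1
  have hηle : ∀ i, η ≤ 2 * hN.eigenvalues i := by
    intro i
    rw [hη]
    refine le_trans (min_le_left _ _) ?_
    have h1 : (⨅ j, hN.eigenvalues j) ≤ hN.eigenvalues i :=
      ciInf_le (Set.Finite.bddBelow (Set.finite_range _)) i
    linarith
  have hpsd1 := herm_smul_sub_psd _ hN η hηle
  set A : Matrix (Fin p) (Fin p) ℝ := (2:ℝ) • Sig - η • blockDiagPart g Sig with hA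
  have hkey : (2:ℝ) • (D * Sig * D) - η • (1 : Matrix (Fin p) (Fin p) ℝ) = D * A * D := by
    rw [← hDsqrt, hA, Matrix.mul_sub, Matrix.sub_mul]
    simp only [Matrix.mul_smul, Matrix.smul_mul]
  rw [hkey] at hpsd1
  have hdet : IsUnit D.det := isUnit_iff_ne_zero.mpr (ne_of_gt hD.det_pos)
  have hDinv : D⁻¹.IsHermitian := hD.1.inv
  have hfin : D⁻¹ * (D * A * D) * (D⁻¹)ᴴ = A := by
    rw [hDinv]
    rw [← Matrix.mul_assoc, ← Matrix.mul_assoc, Matrix.nonsing_inv_mul D hdet, Matrix.one_mul,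
      Matrix.mul_assoc, Matrix.mul_nonsing_inv D hdet, Matrix.mul_one]
  have := hpsd1.mul_mul_conjTranspose_same D⁻¹
  rwa [hfin] at this
end

section
/- Let Σ ∈ ℝ^{p×p} be symmetric positive definite partitioned into m diagonal blocks, D the block-diagonal matrix of inverse square roots of the diagonal blocks, and η ∈ (0, 2λ_min(DΣD)). Then the block-diagonal matrix S with blocks η·Σ_{G_iG_i} satisfies S ≺ 2Σ (2Σ − S is positive definite). -/
open Matrix

private lemma posDef_conj {n : Type*} [Fintype n] [DecidableEq n]
    {M B : Matrix n n ℝ} (hM : M.PosDef) (hB : IsUnit B.det) :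
    (Bᴴ * M * B).PosDef := by
  refine PosDef.of_dotProduct_mulVec_pos (isHermitian_conjTranspose_mul_mul B hM.1) ?_
  · intro x hx
    have hBx : B *ᵥ x ≠ 0 := by
      have hinj := Matrix.mulVec_injective_iff_isUnit.mpr (isUnit_iff_isUnit_det B |>.mpr hB)
      intro h
      exact hx (hinj (by simpa using h))
    simpa only [star_mulVec, dotProduct_mulVec, vecMul_vecMul] using hM.dotProduct_mulVec_pos hBx

/-- group-knockoff construction with strict inequality.  With notation as in
Statement 4, if `0 < η < 2 λ_min(D Σ D)` then `S = η • Σ_B` satisfies `S ≺ 2Σ`. -/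
theorem group_knockoff_posdef {p m : ℕ} [NeZero p]
    (g : Fin p → Fin m)
    (Sig D : Matrix (Fin p) (Fin p) ℝ)
    (hSig : Sig.PosDef)
    (hD : D.PosDef)
    (hDblock : ∀ i j, g i ≠ g j → D i j = 0)
    (hDsqrt : D * blockDiagPart g Sig * D = 1)
    (hDSD : (D * Sig * D).PosDef)
    (η : ℝ) (hη0 : 0 < η) (hη : η < 2 * ⨅ i, hDSD.1.eigenvalues i) :
    ((2 : ℝ) • Sig - η • blockDiagPart g Sig).PosDef := by
  have hDdet : IsUnit D.det := hD.det_pos.ne'.isUnit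
  have hDD : D * D⁻¹ = 1 := Matrix.mul_nonsing_inv _ hDdet
  have hDD' : D⁻¹ * D = 1 := Matrix.nonsing_inv_mul _ hDdet
  -- conjugating a matrix by D⁻¹ undoes conjugation by D
  have key : ∀ X : Matrix (Fin p) (Fin p) ℝ, D⁻¹ * (D * X * D) * D⁻¹ = X := by
    intro X
    calc D⁻¹ * (D * X * D) * D⁻¹ = (D⁻¹ * D) * X * (D * D⁻¹) := by
          simp only [Matrix.mul_assoc]
      _ = X := by rw [hDD, hDD', Matrix.one_mul, Matrix.mul_one]
  -- the positive-definite middle matrix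
  set A := D * Sig * D with hAdef
  have hA : A.IsHermitian := hDSD.1
  set N : Matrix (Fin p) (Fin p) ℝ := (2 : ℝ) • A - η • 1 with hNdef
  -- N is positive definite via the spectral theorem
  have hNpos : N.PosDef := by
    have hUU : (hA.eigenvectorUnitary : Matrix (Fin p) (Fin p) ℝ) *
        star (hA.eigenvectorUnitary : Matrix (Fin p) (Fin p) ℝ) = 1 :=
      Matrix.mem_unitaryGroup_iff.mp hA.eigenvectorUnitary.2
    have hdiag : (diagonal (fun i => 2 * hA.eigenvalues i - η)).PosDef := by
      refine Matrix.posDef_diagonal_iff.mpr fun i => ?_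
      have hle : (⨅ j, hDSD.1.eigenvalues j) ≤ hA.eigenvalues i :=
        ciInf_le (Finite.bddBelow_range _) i
      linarith
    have hNeq : N = (star (hA.eigenvectorUnitary : Matrix (Fin p) (Fin p) ℝ))ᴴ *
        diagonal (fun i => 2 * hA.eigenvalues i - η) *
        (star (hA.eigenvectorUnitary : Matrix (Fin p) (Fin p) ℝ)) := by
      have hcc : (star (hA.eigenvectorUnitary : Matrix (Fin p) (Fin p) ℝ))ᴴ =
          (hA.eigenvectorUnitary : Matrix (Fin p) (Fin p) ℝ) := by
        simp [Matrix.star_eq_conjTranspose]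
      rw [hcc]
      have hd : diagonal (fun i => 2 * hA.eigenvalues i - η) =
          (2 : ℝ) • diagonal (RCLike.ofReal ∘ hA.eigenvalues) - η • (1 : Matrix (Fin p) (Fin p) ℝ) := by
        ext i j
        rcases eq_or_ne i j with rfl | h
        · simp [Matrix.diagonal_apply, Matrix.one_apply, smul_eq_mul]
        · simp [Matrix.diagonal_apply, Matrix.one_apply, h]
      rw [hd, Matrix.mul_sub, Matrix.sub_mul, hNdef]
      congr 1
      · rw [Matrix.mul_smul, Matrix.smul_mul]
        congr 1
        exact hA.spectral_theorem
      · rw [Matrix.mul_smul, Matrix.smul_mul, Matrix.mul_one, hUU]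
    rw [hNeq]
    exact posDef_conj hdiag (Matrix.UnitaryGroup.det_isUnit (star hA.eigenvectorUnitary))
  -- express the goal as a congruence of N by D⁻¹
  have hBD : blockDiagPart g Sig = D⁻¹ * D⁻¹ := by
    have := key (blockDiagPart g Sig)
    rw [hDsqrt, Matrix.mul_one] at this
    exact this.symm
  have hgoal : (2 : ℝ) • Sig - η • blockDiagPart g Sig = (D⁻¹)ᴴ * N * D⁻¹ := by
    have hH : (D⁻¹)ᴴ = D⁻¹ := hD.inv.isHermitian
    rw [hH, hNdef, Matrix.mul_sub, Matrix.sub_mul, Matrix.mul_smul, Matrix.smul_mul,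
      Matrix.mul_smul, Matrix.smul_mul, Matrix.mul_one, hAdef, key, hBD]
  rw [hgoal]
  exact posDef_conj hNpos (hD.inv.det_pos.ne'.isUnit)
end

section
/- Let (X, X̃) be a 2p-dimensional mean-zero Gaussian vector with covariance [[Σ, Σ−S],[Σ−S, Σ]], where Σ is positive definite and S is block-diagonal with respect to a partition G_1,...,G_m of {1,...,p}. Then for any subset 𝒮 ⊆ {1,...,m}, the vector obtained from (X, X̃) by swapping the coordinates X_{G_j} and X̃_{G_j} for each j ∈ 𝒮 has the same distribution as (X, X̃). -/
open Matrix MeasureTheory ProbabilityTheory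

open scoped ENNReal

/-- The standard Gaussian measure on `ι → ℝ`. -/
noncomputable def stdGaussianPi (ι : Type*) [Fintype ι] : Measure (ι → ℝ) :=
  Measure.pi fun _ => gaussianReal 0 1

/-- The group-swap map on coordinates `Fin p ⊕ Fin p`: for groups `j ∈ 𝒮`, the
coordinates of group `G_j` in the first block are exchanged with those in the second. -/
def groupSwap {p m : ℕ} (g : Fin p → Fin m) (𝒮 : Finset (Fin m)) :
    (Fin p ⊕ Fin p) → (Fin p ⊕ Fin p) :=
  fun c => match c with
    | Sum.inl i => if g i ∈ 𝒮 then Sum.inr i else Sum.inl i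
    | Sum.inr i => if g i ∈ 𝒮 then Sum.inl i else Sum.inr i


section Aux

variable {ι : Type*} [Fintype ι] [DecidableEq ι]

variable {ι : Type*} [Fintype ι] [DecidableEq ι]

lemma lmarginal_prod_aux (μ : ι → Measure ℝ) [∀ i, SigmaFinite (μ i)]
    (h : ι → ℝ → ℝ≥0∞) (hm : ∀ i, Measurable (h i)) (s : Finset ι) (x : ι → ℝ) :
    (∫⋯∫⁻_s, (fun y => ∏ i, h i (y i)) ∂μ) x
      = (∏ i ∈ s, ∫⁻ t, h i t ∂ μ i) * ∏ i ∈ sᶜ, h i (x i) := by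
  have hf : Measurable (fun y : ι → ℝ => ∏ i, h i (y i)) :=
    Finset.measurable_prod _ fun i _ => (hm i).comp (measurable_pi_apply i)
  induction s using Finset.induction_on generalizing x with
  | empty => simp [MeasureTheory.lmarginal_empty]
  | @insert i s hi ih =>
    rw [MeasureTheory.lmarginal_insert _ hf hi]
    have key : ∀ xi : ℝ, (∫⋯∫⁻_s, (fun y => ∏ i, h i (y i)) ∂μ) (Function.update x i xi)
        = ((∏ j ∈ s, ∫⁻ t, h j t ∂ μ j) * ∏ j ∈ (insert i s)ᶜ, h j (x j)) * h i xi := by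
      intro xi
      rw [ih]
      have hmem : i ∈ sᶜ := Finset.mem_compl.2 hi
      rw [← Finset.mul_prod_erase _ _ hmem, Function.update_self, ← Finset.compl_insert]
      have : ∏ j ∈ (insert i s)ᶜ, h j (Function.update x i xi j)
          = ∏ j ∈ (insert i s)ᶜ, h j (x j) := by
        refine Finset.prod_congr rfl fun j hj => ?_
        have : j ≠ i := by
          intro e; subst e; simp [Finset.mem_compl] at hj
        rw [Function.update_of_ne this]
      rw [this]; ring
    simp_rw [key]
    rw [lintegral_const_mul _ (hm i), Finset.prod_insert hi]
    ring

lemma lintegral_pi_prod (μ : ι → Measure ℝ) [∀ i, SigmaFinite (μ i)]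
    (h : ι → ℝ → ℝ≥0∞) (hm : ∀ i, Measurable (h i)) :
    ∫⁻ x, ∏ i, h i (x i) ∂ Measure.pi μ = ∏ i, ∫⁻ t, h i t ∂ μ i := by
  rw [MeasureTheory.lintegral_eq_lmarginal_univ (fun _ => 0),
    lmarginal_prod_aux μ h hm Finset.univ (fun _ => 0)]
  simp

lemma stdGaussianPi_eq_withDensity :
    stdGaussianPi ι
      = (volume : Measure (ι → ℝ)).withDensity (fun x => ∏ i, gaussianPDF 0 1 (x i)) := by
  rw [stdGaussianPi]
  refine Measure.pi_eq (μ := fun _ => gaussianReal 0 1) fun s hs => ?_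
  have hρ : Measurable (fun x : ι → ℝ => ∏ i, gaussianPDF 0 1 (x i)) :=
    Finset.measurable_prod _ fun i _ =>
      (measurable_gaussianPDF 0 1).comp (measurable_pi_apply i)
  rw [withDensity_apply _ (MeasurableSet.univ_pi hs)]
  rw [← lintegral_indicator (MeasurableSet.univ_pi hs)]
  have hfac : ∀ x : ι → ℝ, (Set.pi Set.univ s).indicator
      (fun x => ∏ i, gaussianPDF 0 1 (x i)) x
      = ∏ i, (s i).indicator (gaussianPDF 0 1) (x i) := by
    intro x
    by_cases hx : x ∈ Set.pi Set.univ s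
    · rw [Set.indicator_of_mem hx]
      exact Finset.prod_congr rfl fun i _ =>
        (Set.indicator_of_mem (hx i (Set.mem_univ i)) _).symm
    · rw [Set.indicator_of_notMem hx]
      have hex : ∃ i, x i ∉ s i := by
        by_contra hc
        push_neg at hc
        exact hx fun i _ => hc i
      obtain ⟨i, hxi⟩ := hex
      exact (Finset.prod_eq_zero (Finset.mem_univ i)
        (Set.indicator_of_notMem hxi _)).symm
  simp_rw [hfac]
  rw [MeasureTheory.volume_pi, lintegral_pi_prod _ _
    (fun i => (measurable_gaussianPDF 0 1).indicator (hs i))]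
  refine Finset.prod_congr rfl fun i _ => ?_
  rw [gaussianReal_of_var_ne_zero 0 one_ne_zero, withDensity_apply _ (hs i),
    ← lintegral_indicator (hs i)]

lemma map_withDensity_comp {α β : Type*} [MeasurableSpace α] [MeasurableSpace β]
    (μ : Measure α) (f : α → β) (hf : Measurable f) (g : β → ℝ≥0∞) (hg : Measurable g) :
    Measure.map f (μ.withDensity (g ∘ f)) = (Measure.map f μ).withDensity g := by
  ext s hs
  rw [Measure.map_apply hf hs, withDensity_apply _ hs, withDensity_apply _ (hf hs),
    Measure.restrict_map hf hs, lintegral_map hg hf]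
  rfl

lemma measurable_mulVec (M : Matrix ι ι ℝ) : Measurable M.mulVec := by
  have : M.mulVec = ⇑(Matrix.mulVecLin M) := by
    funext x; simp [Matrix.mulVecLin_apply]
  rw [this]
  exact (LinearMap.continuous_on_pi _).measurable

lemma dot_self_mulVec (M : Matrix ι ι ℝ) (x : ι → ℝ) :
    (M.mulVec x) ⬝ᵥ (M.mulVec x) = ((Mᵀ * M).mulVec x) ⬝ᵥ x := by
  rw [Matrix.dotProduct_mulVec, ← Matrix.mulVec_transpose, Matrix.mulVec_mulVec]

set_option maxHeartbeats 2000000 in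
lemma map_mulVec_orth (O : Matrix ι ι ℝ) (hO : Oᵀ * O = 1) :
    Measure.map O.mulVec (stdGaussianPi ι) = stdGaussianPi ι := by
  classical
  have hdet : O.det = 1 ∨ O.det = -1 := by
    have h1 : O.det * O.det = 1 := by
      have := congrArg Matrix.det hO
      rwa [Matrix.det_mul, Matrix.det_transpose, Matrix.det_one] at this
    exact mul_self_eq_one_iff.1 h1
  have hdetne : O.det ≠ 0 := by rcases hdet with h | h <;> rw [h] <;> norm_num
  have habs : |O.det| = 1 := by rcases hdet with h | h <;> rw [h] <;> norm_num
  set ρ : (ι → ℝ) → ℝ≥0∞ := fun x => ∏ i, gaussianPDF 0 1 (x i) with hρdef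
  have hρ : Measurable ρ :=
    Finset.measurable_prod _ fun i _ =>
      (measurable_gaussianPDF 0 1).comp (measurable_pi_apply i)
  have hsum : ∀ x : ι → ℝ, ∑ i, (O.mulVec x i) ^ 2 = ∑ i, (x i) ^ 2 := by
    intro x
    have h1 : (O.mulVec x) ⬝ᵥ (O.mulVec x) = x ⬝ᵥ x := by
      rw [dot_self_mulVec, hO, Matrix.one_mulVec]
    simpa [dotProduct, pow_two] using h1
  have hprodR : ∀ y : ι → ℝ, ∏ i, gaussianPDFReal 0 1 (y i)
      = ((Real.sqrt (2 * Real.pi))⁻¹) ^ (Fintype.card ι)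
        * Real.exp (-(∑ i, (y i) ^ 2) / 2) := by
    intro y
    simp only [gaussianPDFReal, NNReal.coe_one, sub_zero, mul_one]
    rw [Finset.prod_mul_distrib, Finset.prod_const, ← Real.exp_sum, Finset.card_univ]
    congr 1
    rw [← Finset.sum_div]
    congr 1
    rw [← Finset.sum_neg_distrib]
  have hpdf : ∀ y : ι → ℝ, ∏ i, gaussianPDF 0 1 (y i)
      = ENNReal.ofReal (((Real.sqrt (2 * Real.pi))⁻¹) ^ (Fintype.card ι)
        * Real.exp (-(∑ i, (y i) ^ 2) / 2)) := by
    intro y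
    simp only [gaussianPDF]
    rw [← ENNReal.ofReal_prod_of_nonneg fun i _ => gaussianPDFReal_nonneg 0 1 (y i), hprodR]
  have hcomp : ρ ∘ O.mulVec = ρ := by
    funext x
    simp only [Function.comp_apply, hρdef, hpdf]
    rw [hsum]
  rw [stdGaussianPi_eq_withDensity]
  have hrepl : (volume : Measure (ι → ℝ)).withDensity ρ
      = (volume : Measure (ι → ℝ)).withDensity (ρ ∘ O.mulVec) := by
    conv_rhs => rw [hcomp]
  rw [hrepl]
  rw [map_withDensity_comp _ _ (measurable_mulVec O) ρ hρ]
  have hvol : Measure.map O.mulVec (volume : Measure (ι → ℝ)) = volume := by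
    have hm := Real.map_matrix_volume_pi_eq_smul_volume_pi (M := O) hdetne
    rw [show ⇑(Matrix.toLin' O) = O.mulVec from funext fun v => Matrix.toLin'_apply O v] at hm
    rw [hm, abs_inv, habs]
    norm_num
  rw [hvol]
  exact hrepl

lemma dot_mulVec_self (M : Matrix ι ι ℝ) (x y : ι → ℝ) :
    (M.mulVec x) ⬝ᵥ (M.mulVec y) = ((Mᵀ * M).mulVec x) ⬝ᵥ y := by
  rw [Matrix.dotProduct_mulVec, ← Matrix.mulVec_transpose, Matrix.mulVec_mulVec]

set_option maxHeartbeats 1000000 in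
lemma exists_orth (A B : Matrix ι ι ℝ) (h : B * Bᵀ = A * Aᵀ) :
    ∃ O : Matrix ι ι ℝ, Oᵀ * O = 1 ∧ B = A * O := by
  classical
  set E := EuclideanSpace ℝ ι
  set T : E →ₗ[ℝ] E := Matrix.toEuclideanLin Aᵀ with hT
  set U : E →ₗ[ℝ] E := Matrix.toEuclideanLin Bᵀ with hU
  have hinner : ∀ (M : Matrix ι ι ℝ) (x y : E),
      (inner ℝ (Matrix.toEuclideanLin M x) (Matrix.toEuclideanLin M y) : ℝ)
        = ((Mᵀ * M).mulVec (WithLp.equiv 2 _ x)) ⬝ᵥ (WithLp.equiv 2 _ y) := by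
    intro M x y
    rw [← dot_mulVec_self M]
    simp [PiLp.inner_apply, Matrix.toEuclideanLin_apply, dotProduct,
      WithLp.equiv_symm_apply, PiLp.toLp_apply, mul_comm]
  have hinnerTU : ∀ x y : E, (inner ℝ (U x) (U y) : ℝ) = inner ℝ (T x) (T y) := by
    intro x y
    rw [hU, hT, hinner, hinner]
    have hBA : Bᵀᵀ * Bᵀ = Aᵀᵀ * Aᵀ := by
      rw [Matrix.transpose_transpose, Matrix.transpose_transpose, h]
    rw [hBA]
  have hnorm : ∀ x : E, ‖U x‖ = ‖T x‖ := by
    intro x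
    rw [@norm_eq_sqrt_re_inner ℝ, @norm_eq_sqrt_re_inner ℝ, hinnerTU]
  have hker : LinearMap.ker T ≤ LinearMap.ker U := by
    intro x hx
    rw [LinearMap.mem_ker] at *
    have h0 : ‖U x‖ = 0 := by rw [hnorm, hx, norm_zero]
    exact norm_eq_zero.1 h0
  set q := LinearMap.quotKerEquivRange T with hq
  set L : LinearMap.range T →ₗ[ℝ] E :=
    ((LinearMap.ker T).liftQ U hker) ∘ₗ q.symm.toLinearMap with hL
  have hLT : ∀ x : E, L ⟨T x, LinearMap.mem_range_self T x⟩ = U x := by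
    intro x
    have h1 : q.symm ⟨T x, LinearMap.mem_range_self T x⟩ = Submodule.Quotient.mk x := by
      apply q.injective
      rw [LinearEquiv.apply_symm_apply]
      ext
      rw [LinearMap.quotKerEquivRange_apply_mk]
    rw [hL]
    simp only [LinearMap.coe_comp, Function.comp_apply, LinearEquiv.coe_coe, h1]
    exact Submodule.liftQ_apply _ _ _
  have hLnorm : ∀ s : LinearMap.range T, ‖L s‖ = ‖s‖ := by
    rintro ⟨-, x, rfl⟩
    rw [hLT x, hnorm]
    rfl
  set LI : LinearMap.range T →ₗᵢ[ℝ] E := ⟨L, hLnorm⟩ with hLI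
  set Φ : E →ₗᵢ[ℝ] E := LI.extend with hΦ
  have hΦT : ∀ x : E, Φ (T x) = U x := by
    intro x
    have h2 := LI.extend_apply ⟨T x, LinearMap.mem_range_self T x⟩
    calc Φ (T x) = Φ ((⟨T x, LinearMap.mem_range_self T x⟩ : LinearMap.range T) : E) := rfl
    _ = LI ⟨T x, LinearMap.mem_range_self T x⟩ := h2
    _ = U x := hLT x
  set W : Matrix ι ι ℝ := Matrix.toEuclideanLin.symm Φ.toLinearMap with hW
  have hWΦ : (Matrix.toEuclideanLin W : E →ₗ[ℝ] E) = Φ.toLinearMap := by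
    rw [hW]; exact Matrix.toEuclideanLin.apply_symm_apply _
  have hBW : Bᵀ = W * Aᵀ := by
    apply Matrix.toEuclideanLin.injective
    apply LinearMap.ext
    intro x
    have h1 : Matrix.toEuclideanLin (W * Aᵀ) x
        = Matrix.toEuclideanLin W (Matrix.toEuclideanLin Aᵀ x) := by
      simp [Matrix.toEuclideanLin_apply, Matrix.mulVec_mulVec]
    rw [h1, hWΦ]
    exact (hΦT x).symm
  have hWW : Wᵀ * W = 1 := by
    have hWdot : ∀ v w : ι → ℝ, ((Wᵀ * W).mulVec v) ⬝ᵥ w = v ⬝ᵥ w := by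
      intro v w
      have h1 := Φ.inner_map_map ((WithLp.equiv 2 (ι → ℝ)).symm v) ((WithLp.equiv 2 (ι → ℝ)).symm w)
      have h2 := hinner W ((WithLp.equiv 2 (ι → ℝ)).symm v) ((WithLp.equiv 2 (ι → ℝ)).symm w)
      rw [hWΦ] at h2
      have h3 : (Φ.toLinearMap : E → E) = ⇑Φ := rfl
      rw [h3, h1] at h2
      have h4 : (inner ℝ ((WithLp.equiv 2 (ι → ℝ)).symm v) ((WithLp.equiv 2 (ι → ℝ)).symm w) : ℝ)
          = v ⬝ᵥ w := by
        simp [PiLp.inner_apply, dotProduct, WithLp.equiv_symm_apply, PiLp.toLp_apply, mul_comm]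
      rw [h4] at h2
      simpa using h2.symm
    ext i j
    have h5 := hWdot (Pi.single j 1) (Pi.single i 1)
    simpa [dotProduct_single, Matrix.mulVec_single, Pi.single_apply, Matrix.one_apply,
      eq_comm] using h5
  refine ⟨Wᵀ, ?_, ?_⟩
  · rw [Matrix.transpose_transpose]
    rw [mul_eq_one_comm] at hWW
    exact hWW
  · have := congrArg Matrix.transpose hBW
    rwa [Matrix.transpose_transpose, Matrix.transpose_mul, Matrix.transpose_transpose] at this

end Aux

/-- group-swap exchangeability of group knockoffs.  If `(X, X̃)` is a
mean-zero Gaussian vector with covariance `G = [[Σ, Σ−S],[Σ−S, Σ]]` (realized as the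
pushforward of a standard Gaussian by any `A` with `A Aᵀ = G`), `Σ` is positive definite
and `S` is symmetric and group-block-diagonal, then swapping the groups in `𝒮` leaves the
distribution unchanged, for every `𝒮 ⊆ {1,…,m}`. -/
theorem group_knockoff_exchangeable {p m : ℕ}
    (g : Fin p → Fin m)
    (Sig S : Matrix (Fin p) (Fin p) ℝ)
    (hSig : Sig.PosDef) (hS : S.IsHermitian)
    (hSblock : ∀ i j, g i ≠ g j → S i j = 0)
    (A : Matrix (Fin p ⊕ Fin p) (Fin p ⊕ Fin p) ℝ)
    (hA : A * Aᵀ = Matrix.fromBlocks Sig (Sig - S) (Sig - S) Sig)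
    (μ : Measure ((Fin p ⊕ Fin p) → ℝ))
    (hμ : μ = Measure.map A.mulVec (stdGaussianPi (Fin p ⊕ Fin p)))
    (𝒮 : Finset (Fin m)) :
    Measure.map (fun x => x ∘ groupSwap g 𝒮) μ = μ := by
  classical
  subst hμ
  set σ := groupSwap g 𝒮 with hσ
  have hmeasσ : Measurable (fun x : (Fin p ⊕ Fin p) → ℝ => x ∘ σ) :=
    measurable_pi_lambda _ fun i => measurable_pi_apply (σ i)
  rw [Measure.map_map hmeasσ (measurable_mulVec A)]
  have hcompose : (fun x : (Fin p ⊕ Fin p) → ℝ => x ∘ σ) ∘ A.mulVec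
      = (A.submatrix σ id).mulVec := by
    funext z
    funext i
    simp [Matrix.mulVec, Matrix.submatrix_apply, Function.comp, dotProduct]
  rw [hcompose]
  set B := A.submatrix σ id with hB
  have hGinv : (A * Aᵀ).submatrix σ σ = A * Aᵀ := by
    rw [hA]
    ext c d
    have key : ∀ (i j : Fin p), g i ∈ 𝒮 → g j ∉ 𝒮 → S i j = 0 := by
      intro i j h1 h2
      exact hSblock i j fun e => h2 (e ▸ h1)
    have key' : ∀ (i j : Fin p), g i ∉ 𝒮 → g j ∈ 𝒮 → S i j = 0 := by
      intro i j h1 h2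
      exact hSblock i j fun e => h1 (e ▸ h2)
    cases c with
    | inl i =>
      cases d with
      | inl j =>
        by_cases h1 : g i ∈ 𝒮 <;> by_cases h2 : g j ∈ 𝒮 <;>
          simp [hσ, groupSwap, h1, h2, Matrix.sub_apply, key i j, key' i j]
      | inr j =>
        by_cases h1 : g i ∈ 𝒮 <;> by_cases h2 : g j ∈ 𝒮 <;>
          simp [hσ, groupSwap, h1, h2, Matrix.sub_apply, key i j, key' i j]
    | inr i =>
      cases d with
      | inl j =>
        by_cases h1 : g i ∈ 𝒮 <;> by_cases h2 : g j ∈ 𝒮 <;>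
          simp [hσ, groupSwap, h1, h2, Matrix.sub_apply, key i j, key' i j]
      | inr j =>
        by_cases h1 : g i ∈ 𝒮 <;> by_cases h2 : g j ∈ 𝒮 <;>
          simp [hσ, groupSwap, h1, h2, Matrix.sub_apply, key i j, key' i j]
  have hBB : B * Bᵀ = A * Aᵀ := by
    rw [hB, Matrix.transpose_submatrix,
      ← Matrix.submatrix_mul A Aᵀ σ id σ Function.bijective_id]
    exact hGinv
  obtain ⟨O, hO, hBO⟩ := exists_orth A B hBB
  rw [hBO]
  have hAO : (A * O).mulVec = A.mulVec ∘ O.mulVec := by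
    funext z
    rw [Function.comp_apply, Matrix.mulVec_mulVec]
  rw [hAO, ← Measure.map_map (measurable_mulVec A) (measurable_mulVec O),
    map_mulVec_orth O hO]
end

section
/- Let i.i.d. signs ε_1,...,ε_n be uniform on {−1,+1} and let V(t) = #{j ≤ n : ε_j = +1} and V'(t) = #{j ≤ n : ε_j = −1}. Then for any n ≥ 0, E[ V / (1 + V') ] ≤ 1, where V + V' = n. -/
open MeasureTheory ProbabilityTheory
open scoped Classical

lemma sum_value_le (n : ℕ) :
    ∑ s : Fin n → Bool, (((Finset.univ.filter fun j => s j = true).card : ℝ) /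
      (1 + ((Finset.univ.filter fun j => s j = false).card : ℝ))) ≤ 2 ^ n := by
  have hcard : ∀ s : Fin n → Bool, (Finset.univ.filter fun j => s j = false).card
      = n - (Finset.univ.filter fun j => s j = true).card := by
    intro s
    have h := Finset.card_filter_add_card_filter_not
      (s := (Finset.univ : Finset (Fin n))) (p := fun j => s j = true)
    have h2 : (Finset.univ.filter fun j => ¬ s j = true) =
        (Finset.univ.filter fun j => s j = false) := by
      apply Finset.filter_congr; intro j _; simp
    rw [h2, Finset.card_univ, Fintype.card_fin] at h
    omega
  have hbij : Function.Bijective (fun (S : Finset (Fin n)) (j : Fin n) => decide (j ∈ S)) := by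
    constructor
    · intro S T h
      ext j
      have := congrFun h j
      simpa using this
    · intro s
      refine ⟨Finset.univ.filter (fun j => s j = true), ?_⟩
      funext j
      by_cases h : s j = true <;> simp [h]
  have key : (∑ s : Fin n → Bool, (((Finset.univ.filter fun j => s j = true).card : ℝ) /
      (1 + ((Finset.univ.filter fun j => s j = false).card : ℝ))))
      = ∑ S : Finset (Fin n), ((S.card : ℝ) / (1 + ((n - S.card : ℕ) : ℝ))) := by
    refine (Fintype.sum_bijective _ hbij _ _ ?_).symm
    intro S
    have h1 : (Finset.univ.filter fun j => decide (j ∈ S) = true) = S := by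
      ext j; simp
    rw [hcard, h1]
  rw [key]
  have key2 : (∑ S : Finset (Fin n), ((S.card : ℝ) / (1 + ((n - S.card : ℕ) : ℝ))))
      = ∑ m ∈ Finset.range (n + 1), n.choose m • ((m : ℝ) / (1 + ((n - m : ℕ) : ℝ))) := by
    rw [← Finset.powerset_univ]
    rw [Finset.sum_powerset_apply_card (fun k => (k : ℝ) / (1 + ((n - k : ℕ) : ℝ)))]
    simp [Finset.card_univ]
  rw [key2, Finset.sum_range_succ']
  simp only [Nat.cast_zero, Nat.choose_zero_right, one_smul, Nat.sub_zero, zero_div, add_zero]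
  have hterm : ∀ j ∈ Finset.range n,
      (n.choose (j+1)) • (((j+1 : ℕ) : ℝ) / (1 + ((n - (j+1) : ℕ) : ℝ))) = (n.choose j : ℝ) := by
    intro j hj
    rw [Finset.mem_range] at hj
    have h2 : n - (j+1) + 1 = n - j := by omega
    have hden : (1 : ℝ) + ((n - (j+1) : ℕ) : ℝ) = ((n - j : ℕ) : ℝ) := by
      rw [← h2]; push_cast; ring
    rw [hden, nsmul_eq_mul]
    have hpos : (0 : ℝ) < ((n - j : ℕ) : ℝ) := by
      have : 0 < n - j := by omega
      exact_mod_cast this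
    rw [← mul_div_assoc, div_eq_iff (ne_of_gt hpos)]
    have := Nat.choose_succ_right_eq n j
    exact_mod_cast this
  rw [Finset.sum_congr rfl hterm]
  have : (∑ j ∈ Finset.range n, (n.choose j : ℝ)) ≤ ∑ j ∈ Finset.range (n+1), (n.choose j : ℝ) := by
    apply Finset.sum_le_sum_of_subset_of_nonneg
    · exact Finset.range_subset_range.mpr (Nat.le_succ n)
    · intro i _ _; positivity
  refine this.trans ?_
  rw [← Nat.cast_sum]
  rw [Nat.sum_range_choose]
  norm_num

/-- for i.i.d. signs `ε_1,…,ε_n` uniform on `{−1,+1}`, letting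
`V = #{j : ε_j = +1}` and `V' = #{j : ε_j = −1}` (so `V + V' = n`), we have
`E[V / (1 + V')] ≤ 1`. -/
theorem signs_ratio_expectation_le_one {Ω : Type*} [MeasurableSpace Ω]
    (μ : Measure Ω) [IsProbabilityMeasure μ] {n : ℕ}
    (ε : Fin n → Ω → ℝ) (hmeas : ∀ j, Measurable (ε j))
    (hindep : iIndepFun ε μ)
    (hunif : ∀ j, Measure.map (ε j) μ
      = (2 : ENNReal)⁻¹ • Measure.dirac (1 : ℝ) + (2 : ENNReal)⁻¹ • Measure.dirac (-1 : ℝ)) :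
    ∫ ω, ((Finset.univ.filter fun j => ε j ω = 1).card : ℝ)
        / (1 + ((Finset.univ.filter fun j => ε j ω = -1).card : ℝ)) ∂μ ≤ 1 := by
  set val : Bool → ℝ := fun b => if b then 1 else -1 with hval
  set value : (Fin n → Bool) → ℝ := fun s =>
    ((Finset.univ.filter fun j => s j = true).card : ℝ)
      / (1 + ((Finset.univ.filter fun j => s j = false).card : ℝ)) with hvalue
  set A : (Fin n → Bool) → Set Ω := fun s => ⋂ j, ε j ⁻¹' {val (s j)} with hA
  -- each singleton preimage has measure 1/2
  have hsingle : ∀ j (b : Bool), μ (ε j ⁻¹' {val b}) = 2⁻¹ := by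
    intro j b
    rw [← Measure.map_apply (hmeas j) (measurableSet_singleton _), hunif j]
    cases b <;>
      simp [val, Measure.dirac_apply, Set.indicator, show ((-1:ℝ) ≠ 1) by norm_num,
        show ((1:ℝ) ≠ -1) by norm_num]
  have hAmeas : ∀ s, MeasurableSet (A s) := fun s =>
    MeasurableSet.iInter fun j => (hmeas j) (measurableSet_singleton _)
  have hAcard : ∀ s, μ (A s) = 2⁻¹ ^ n := by
    intro s
    rw [hA]
    rw [hindep.meas_iInter (fun i => ⟨{val (s i)}, measurableSet_singleton _, rfl⟩)]
    simp [hsingle, Finset.card_univ]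
  -- a.e. every ε j ω is ±1
  have hae : ∀ᵐ ω ∂μ, ∀ j, ε j ω = 1 ∨ ε j ω = -1 := by
    rw [ae_all_iff]
    intro j
    have h1 : μ (ε j ⁻¹' {(1:ℝ), -1}) = 1 := by
      rw [← Measure.map_apply (hmeas j) (by measurability), hunif j]
      simp [Measure.dirac_apply, Set.indicator, show ((-1:ℝ) ≠ 1) by norm_num]
      rw [ENNReal.inv_two_add_inv_two]
    have h2 : μ (ε j ⁻¹' {(1:ℝ), -1})ᶜ = 0 := by
      rw [measure_compl ((hmeas j) (by measurability)) (measure_ne_top _ _), h1]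
      simp
    filter_upwards [measure_eq_zero_iff_ae_notMem.mp h2] with ω hω
    have hmem : ε j ω ∈ ({(1:ℝ), -1} : Set ℝ) := not_not.mp hω
    simpa using hmem
  -- the integrand equals a sum of indicators a.e.
  have hvalinj : ∀ b b' : Bool, val b = val b' → b = b' := by
    intro b b' h
    cases b <;> cases b' <;> simp [val] at h ⊢ <;> norm_num at h
  have heq : (fun ω => ((Finset.univ.filter fun j => ε j ω = 1).card : ℝ)
        / (1 + ((Finset.univ.filter fun j => ε j ω = -1).card : ℝ)))
      =ᵐ[μ] fun ω => ∑ s : Fin n → Bool, (A s).indicator (fun _ => value s) ω := by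
    filter_upwards [hae] with ω hω
    set s₀ : Fin n → Bool := fun j => decide (ε j ω = 1) with hs₀
    have hs₀true : ∀ j, s₀ j = true ↔ ε j ω = 1 := by
      intro j; simp only [hs₀, decide_eq_true_eq]
    have hs₀false : ∀ j, s₀ j = false ↔ ¬ ε j ω = 1 := by
      intro j; simp only [hs₀, decide_eq_false_iff_not]
    have ha : ∀ j, ε j ω = val (s₀ j) := by
      intro j
      by_cases h : ε j ω = 1
      · rw [(hs₀true j).mpr h]; simpa [val] using h
      · rcases hω j with h1 | h2
        · exact absurd h1 h
        · rw [(hs₀false j).mpr h]; simpa [val] using h2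
    have hmem : ω ∈ A s₀ := Set.mem_iInter.mpr fun j => ha j
    have hnot : ∀ s, s ≠ s₀ → ω ∉ A s := by
      intro s hs hmem'
      apply hs
      funext j
      have h1 : ε j ω = val (s j) := Set.mem_iInter.mp hmem' j
      exact hvalinj _ _ (h1.symm.trans (ha j))
    rw [Finset.sum_eq_single s₀
      (fun s _ hs => Set.indicator_of_notMem (hnot s hs) _)
      (fun h => absurd (Finset.mem_univ s₀) h),
      Set.indicator_of_mem hmem]
    have hf1 : (Finset.univ.filter fun j => ε j ω = 1)
        = (Finset.univ.filter fun j => s₀ j = true) := by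
      apply Finset.filter_congr; intro j _; exact (hs₀true j).symm
    have hf2 : (Finset.univ.filter fun j => ε j ω = -1)
        = (Finset.univ.filter fun j => s₀ j = false) := by
      apply Finset.filter_congr; intro j _
      constructor
      · intro h
        refine (hs₀false j).mpr ?_
        rw [h]; norm_num
      · intro h
        rcases hω j with h1 | h2
        · exact absurd ((hs₀true j).mpr h1) (by simp [h])
        · exact h2
    rw [hf1, hf2]
  rw [integral_congr_ae heq]
  rw [integral_finset_sum _ (fun s _ =>
    (integrable_const (value s)).indicator (hAmeas s))]
  have hint : ∀ s : Fin n → Bool,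
      ∫ ω, (A s).indicator (fun _ => value s) ω ∂μ = ((2:ℝ)⁻¹ ^ n) * value s := by
    intro s
    rw [integral_indicator_const _ (hAmeas s), measureReal_def, hAcard s]
    simp [ENNReal.toReal_pow]
  rw [Finset.sum_congr rfl (fun s _ => hint s), ← Finset.mul_sum]
  have hb := sum_value_le n
  calc (2:ℝ)⁻¹ ^ n * ∑ s : Fin n → Bool, value s
      ≤ (2:ℝ)⁻¹ ^ n * 2 ^ n := by
        apply mul_le_mul_of_nonneg_left hb (by positivity)
    _ = 1 := by rw [← mul_pow]; norm_num
end

section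
/- Let Σ = (1−ρ)I_p + (ρ−γρ)B + γρJ_p where B is block diagonal with m blocks each equal to the k×k all-ones matrix (p = mk) and J_p is the p×p all-ones matrix. Then the eigenvalues of Σ are exactly: 1−ρ (with multiplicity m(k−1)), 1+(k−1)ρ−γρk (with multiplicity m−1), and 1+(k−1)ρ+γρk(m−1) (with multiplicity 1). -/
open Matrix Polynomial Kronecker

section Sim16Aux
variable {R : Type*} [CommRing R] {n : Type*} [Fintype n] [DecidableEq n]

lemma sim16_charpoly_conj (P Q D : Matrix n n R) (h : P * Q = 1) :
    (P * D * Q).charpoly = D.charpoly := by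
  have hmap : (P.map (C : R → R[X])) * (Q.map C) = 1 := by
    rw [← Matrix.map_mul, h]; simp
  have hc : charmatrix (P * D * Q) = P.map C * charmatrix D * Q.map C := by
    rw [charmatrix, charmatrix]
    simp only [RingHom.mapMatrix_apply]
    rw [Matrix.mul_sub, Matrix.sub_mul, scalar_apply, ← Matrix.smul_one_eq_diagonal]
    rw [Matrix.mul_smul, Matrix.smul_mul, Matrix.mul_one, hmap, ← Matrix.map_mul,
      ← Matrix.map_mul]
  rw [Matrix.charpoly, hc, Matrix.det_mul, Matrix.det_mul, Matrix.charpoly]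
  have h2 : (P.map (C : R → R[X])).det * (Q.map C).det = 1 := by
    rw [← Matrix.det_mul, hmap, Matrix.det_one]
  calc (P.map (C : R → R[X])).det * (charmatrix D).det * (Q.map C).det
      = (charmatrix D).det * ((P.map (C : R → R[X])).det * (Q.map C).det) := by ring
    _ = (charmatrix D).det := by rw [h2, mul_one]

lemma sim16_charpoly_diagonal (d : n → R) :
    (Matrix.diagonal d).charpoly = ∏ i, (X - C (d i)) := by
  have h : charmatrix (Matrix.diagonal d) = Matrix.diagonal fun i => X - C (d i) := by
    ext i j
    by_cases hij : i = j
    · subst hij; simp [charmatrix_apply_eq]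
    · simp [charmatrix_apply_ne _ _ _ hij, Matrix.diagonal_apply_ne _ hij]
  rw [Matrix.charpoly, h, Matrix.det_diagonal]

end Sim16Aux

namespace Sim16

noncomputable def Pm (n : ℕ) : Matrix (Fin (n+1)) (Fin (n+1)) ℝ :=
  Matrix.of fun x j => if j = 0 then 1 else (if x = j then (1:ℝ) else 0) - (if x = 0 then 1 else 0)

noncomputable def Qm (n : ℕ) : Matrix (Fin (n+1)) (Fin (n+1)) ℝ :=
  Matrix.of fun x j => if x = 0 then (1:ℝ)/(n+1) else (if x = j then (1:ℝ) else 0) - 1/(n+1)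

noncomputable def Jm (n : ℕ) : Matrix (Fin (n+1)) (Fin (n+1)) ℝ := Matrix.of fun _ _ => 1

noncomputable def dv (n : ℕ) : Fin (n+1) → ℝ := fun j => if j = 0 then ((n:ℝ)+1) else 0

lemma zero_ne_succ (n : ℕ) (i : Fin n) : (0 : Fin (n+1)) ≠ i.succ :=
  (Fin.succ_ne_zero i).symm

lemma PQ (n : ℕ) : Pm n * Qm n = 1 := by
  have hn' : ((n:ℝ)+1) ≠ 0 := by positivity
  ext x z
  rw [Matrix.mul_apply, Fin.sum_univ_succ]
  rcases Fin.eq_zero_or_eq_succ x with hx | ⟨x', rfl⟩ <;>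
    rcases Fin.eq_zero_or_eq_succ z with hz | ⟨z', rfl⟩
  · subst hx hz
    simp [Pm, Qm, Fin.succ_ne_zero, zero_ne_succ, Matrix.one_apply]
    field_simp
    ring
  · subst hx
    simp [Pm, Qm, Fin.succ_ne_zero, zero_ne_succ, Matrix.one_apply, sub_mul,
      Finset.sum_sub_distrib, Finset.sum_ite_eq', Fin.succ_inj]
    field_simp
    ring
  · subst hz
    simp [Pm, Qm, Fin.succ_ne_zero, zero_ne_succ, Matrix.one_apply, mul_sub,
      Finset.sum_sub_distrib, Finset.sum_ite_eq', Fin.succ_inj,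
      Function.Injective.eq_iff (Fin.succ_injective _)]
  · simp [Pm, Qm, Fin.succ_ne_zero, zero_ne_succ, Matrix.one_apply, mul_sub,
      Finset.sum_sub_distrib, Finset.sum_ite_eq', Fin.succ_inj,
      Function.Injective.eq_iff (Fin.succ_injective _)]

lemma JP (n : ℕ) : Jm n * Pm n = Pm n * Matrix.diagonal (dv n) := by
  ext x j
  rw [Matrix.mul_apply, Matrix.mul_apply]
  rcases Fin.eq_zero_or_eq_succ j with hj | ⟨j', rfl⟩
  · subst hj
    simp [Jm, Pm, dv, Matrix.diagonal_apply, Finset.sum_ite_eq', Fin.sum_univ_succ]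
  · simp [Jm, Pm, dv, Fin.succ_ne_zero, zero_ne_succ, Matrix.diagonal_apply,
      Finset.sum_sub_distrib, Finset.sum_ite_eq', Fin.sum_univ_succ, Fin.succ_inj,
      Function.Injective.eq_iff (Fin.succ_injective _)]

end Sim16

/-- spectrum of the equicorrelated-blocks covariance matrix
`Σ = (1−ρ)I + (ρ−γρ)B + γρJ` on `p = mk` coordinates: its characteristic polynomial is
`(X − (1−ρ))^{m(k−1)} · (X − (1+(k−1)ρ−γρk))^{m−1} · (X − (1+(k−1)ρ+γρk(m−1)))`,
i.e. the eigenvalues are `1−ρ` with multiplicity `m(k−1)`, `1+(k−1)ρ−γρk` with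
multiplicity `m−1`, and `1+(k−1)ρ+γρk(m−1)` with multiplicity `1`. -/
theorem simulation_covariance_charpoly (m k : ℕ) (hm : 0 < m) (hk : 0 < k)
    (ρ γ : ℝ)
    (B J : Matrix (Fin m × Fin k) (Fin m × Fin k) ℝ)
    (hB : ∀ a b : Fin m × Fin k, B a b = if a.1 = b.1 then 1 else 0)
    (hJ : ∀ a b : Fin m × Fin k, J a b = 1)
    (Sig : Matrix (Fin m × Fin k) (Fin m × Fin k) ℝ)
    (hSig : Sig = (1 - ρ) • (1 : Matrix (Fin m × Fin k) (Fin m × Fin k) ℝ)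
        + (ρ - γ * ρ) • B + (γ * ρ) • J) :
    Sig.charpoly
      = (X - C (1 - ρ)) ^ (m * (k - 1))
        * (X - C (1 + ((k : ℝ) - 1) * ρ - γ * ρ * (k : ℝ))) ^ (m - 1)
        * (X - C (1 + ((k : ℝ) - 1) * ρ + γ * ρ * (k : ℝ) * ((m : ℝ) - 1))) := by
  obtain ⟨m', rfl⟩ : ∃ m', m = m' + 1 := ⟨m - 1, (Nat.succ_pred_eq_of_pos hm).symm⟩
  obtain ⟨k', rfl⟩ : ∃ k', k = k' + 1 := ⟨k - 1, (Nat.succ_pred_eq_of_pos hk).symm⟩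
  open Sim16 in
  -- identify B and J as Kronecker products
  have hBk : B = (1 : Matrix (Fin (m'+1)) (Fin (m'+1)) ℝ) ⊗ₖ Jm k' := by
    ext a b
    rw [hB]
    simp [Matrix.kroneckerMap_apply, Jm, Matrix.one_apply]
  have hJk : J = Jm m' ⊗ₖ Jm k' := by
    ext a b
    rw [hJ]
    simp [Matrix.kroneckerMap_apply, Jm]
  set Pb := Pm m' ⊗ₖ Pm k' with hPb
  set Qb := Qm m' ⊗ₖ Qm k' with hQb
  set Db := (1 - ρ) • (1 : Matrix (Fin (m'+1) × Fin (k'+1)) (Fin (m'+1) × Fin (k'+1)) ℝ)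
      + (ρ - γ * ρ) • ((1 : Matrix (Fin (m'+1)) (Fin (m'+1)) ℝ) ⊗ₖ Matrix.diagonal (dv k'))
      + (γ * ρ) • (Matrix.diagonal (dv m') ⊗ₖ Matrix.diagonal (dv k')) with hDb
  have hPQ : Pb * Qb = 1 := by
    rw [hPb, hQb, ← Matrix.mul_kronecker_mul, PQ, PQ, Matrix.one_kronecker_one]
  have hSP : Sig * Pb = Pb * Db := by
    rw [hSig, hBk, hJk, hDb]
    rw [Matrix.add_mul, Matrix.add_mul, Matrix.mul_add, Matrix.mul_add]
    rw [Matrix.smul_mul, Matrix.smul_mul, Matrix.smul_mul,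
      Matrix.mul_smul, Matrix.mul_smul, Matrix.mul_smul]
    congr 2
    · rw [Matrix.one_mul, Matrix.mul_one]
    · rw [hPb, ← Matrix.mul_kronecker_mul, Matrix.one_mul, JP, ← Matrix.mul_kronecker_mul,
        Matrix.mul_one]
    · rw [hPb, ← Matrix.mul_kronecker_mul, JP, JP, ← Matrix.mul_kronecker_mul]
  have hSigEq : Sig = Pb * Db * Qb := by
    calc Sig = Sig * (Pb * Qb) := by rw [hPQ, Matrix.mul_one]
    _ = (Sig * Pb) * Qb := by rw [Matrix.mul_assoc]
    _ = Pb * Db * Qb := by rw [hSP]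
  have hDbDiag : Db = Matrix.diagonal (fun p : Fin (m'+1) × Fin (k'+1) =>
      (1 - ρ) + (ρ - γ * ρ) * dv k' p.2 + (γ * ρ) * (dv m' p.1 * dv k' p.2)) := by
    have h1m : (1 : Matrix (Fin (m'+1)) (Fin (m'+1)) ℝ) = Matrix.diagonal fun _ => (1:ℝ) :=
      Matrix.diagonal_one.symm
    have h1p : (1 : Matrix (Fin (m'+1) × Fin (k'+1)) (Fin (m'+1) × Fin (k'+1)) ℝ)
        = Matrix.diagonal fun _ => (1:ℝ) := Matrix.diagonal_one.symm
    rw [hDb, h1m, h1p, Matrix.diagonal_kronecker_diagonal,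
      Matrix.diagonal_kronecker_diagonal, ← Matrix.diagonal_smul, ← Matrix.diagonal_smul,
      ← Matrix.diagonal_smul, Matrix.diagonal_add, Matrix.diagonal_add]
    funext p
    simp [mul_comm]
  rw [hSigEq, sim16_charpoly_conj _ _ _ hPQ, hDbDiag, sim16_charpoly_diagonal]
  rw [Fintype.prod_prod_type]
  rw [Fin.prod_univ_succ]
  have hrow : ∀ a : Fin (m'+1),
      (∏ b : Fin (k'+1), (X - C ((1 - ρ) + (ρ - γ * ρ) * dv k' b + (γ * ρ) * (dv m' a * dv k' b))))
      = (X - C ((1 - ρ) + (ρ - γ * ρ) * ((k':ℝ)+1) + (γ * ρ) * (dv m' a * ((k':ℝ)+1))))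
        * (X - C (1 - ρ)) ^ k' := by
    intro a
    rw [Fin.prod_univ_succ]
    simp [dv, Fin.succ_ne_zero]
  simp only [hrow]
  have h0 : dv m' (0 : Fin (m'+1)) = (m':ℝ)+1 := by simp [dv]
  have hs : ∀ a' : Fin m', dv m' a'.succ = 0 := by
    intro a'; simp [dv, Fin.succ_ne_zero]
  rw [h0]
  simp only [hs, mul_zero, zero_mul, mul_zero, add_zero]
  rw [Finset.prod_const, Finset.card_univ, Fintype.card_fin]
  have e1 : (1:ℝ) - ρ + (ρ - γ * ρ) * ((k':ℝ)+1) + γ * ρ * (((m':ℝ)+1) * ((k':ℝ)+1))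
      = 1 + ((↑(k'+1):ℝ) - 1) * ρ + γ * ρ * (↑(k'+1):ℝ) * ((↑(m'+1):ℝ) - 1) := by
    push_cast; ring
  have e2 : (1:ℝ) - ρ + (ρ - γ * ρ) * ((k':ℝ)+1)
      = 1 + ((↑(k'+1):ℝ) - 1) * ρ - γ * ρ * (↑(k'+1):ℝ) := by
    push_cast; ring
  rw [e1, e2]
  have hn1 : (m'+1) * ((k'+1) - 1) = (m'+1) * k' := by simp
  have hn2 : (m'+1) - 1 = m' := by simp
  rw [hn1, hn2, mul_pow]
  ring
end
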